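/- Suppose X and Y are 1-geodesic metric spaces and f : X → Y is an (η,φ,B)-coarse isometry. If W ⊆ X coarsely n-separates X, then f(W) coarsely n-separates Y. -/

import Mathlib

open Metric Set
open scoped NNReal

/-- The closed `r`-neighbourhood `N_r(A)` of a subset `A` of a metric space. -/
def nbhd {X : Type*} [PseudoMetricSpace X] (r : ℝ≥0) (A : Set X) : Set X :=
  {x : X | ∃ a ∈ A, nndist x a ≤ r}

/-- The coarse `r`-boundary `∂_r C := {x ∈ X \ C : d(x,C) ≤ r}`. -/
def coarseBoundary {X : Type*} [PseudoMetricSpace X] (r : ℝ≥0) (C : Set X) : Set X :=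
  {x : X | x ∉ C ∧ ∃ c ∈ C, nndist x c ≤ r}

/-- `C` is an `(r,A)`-coarse complementary component of `W`:
`∂_r (C \ N_A(W)) ⊆ N_A(W)`. -/
def IsCCC {X : Type*} [PseudoMetricSpace X] (r A : ℝ≥0) (W C : Set X) : Prop :=
  coarseBoundary r (C \ nbhd A W) ⊆ nbhd A W

/-- `C` is a coarse complementary component of `W`, i.e. an `(r,A)`-coarse complementary
component for some `r ≥ 1`, `A ≥ 0`. -/
def IsCoarseCompComplement {X : Type*} [PseudoMetricSpace X] (W C : Set X) : Prop :=
  ∃ r A : ℝ≥0, 1 ≤ r ∧ IsCCC r A W C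

/-- A coarse complementary component is shallow if contained in some neighbourhood of `W`. -/
def IsShallow {X : Type*} [PseudoMetricSpace X] (W C : Set X) : Prop :=
  ∃ R : ℝ≥0, C ⊆ nbhd R W

/-- A metric space is 1-geodesic if any two points are joined by a discrete geodesic. -/
def OneGeodesic (X : Type*) [PseudoMetricSpace X] : Prop :=
  ∀ x y : X, ∃ (n : ℕ) (c : ℕ → X), c 0 = x ∧ c n = y ∧
    ∀ i ≤ n, ∀ j ≤ n, dist (c i) (c j) = |(i : ℝ) - (j : ℝ)|

/-- `W` coarsely `n`-separates `X`: there are `n` deep, pairwise coarse disjoint,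
coarse complementary components of `W`. -/
def CoarselySeparates {X : Type*} [PseudoMetricSpace X] (n : ℕ) (W : Set X) : Prop :=
  ∃ C : Fin n → Set X,
    (∀ i, IsCoarseCompComplement W (C i)) ∧
    (∀ i, ¬ IsShallow W (C i)) ∧
    ∀ i j : Fin n, i ≠ j → IsShallow W (C i ∩ C j)

/-- A proper nondecreasing function `ℝ≥0 → ℝ≥0`: nondecreasing and tending to infinity
(equivalently, preimages of compact sets are compact). -/
def ProperND (η : ℝ≥0 → ℝ≥0) : Prop :=
  Monotone η ∧ Filter.Tendsto η Filter.atTop Filter.atTop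

/-- `f : X → Y` is an `(η,φ)`-coarse embedding:
`η(d(x,y)) ≤ d(f x, f y) ≤ φ(d(x,y))` for all `x, y`. -/
def IsCoarseEmbeddingWith {X Y : Type*} [PseudoMetricSpace X] [PseudoMetricSpace Y]
    (η φ : ℝ≥0 → ℝ≥0) (f : X → Y) : Prop :=
  ∀ x y : X, η (nndist x y) ≤ nndist (f x) (f y) ∧ nndist (f x) (f y) ≤ φ (nndist x y)

/-- `f` is a coarse embedding: an `(η,φ)`-coarse embedding for some proper
nondecreasing `η, φ`. -/
def IsCoarseEmbedding {X Y : Type*} [PseudoMetricSpace X] [PseudoMetricSpace Y]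
    (f : X → Y) : Prop :=
  ∃ η φ : ℝ≥0 → ℝ≥0, ProperND η ∧ ProperND φ ∧ IsCoarseEmbeddingWith η φ f

/-- `f` is `B`-dense: `N_B(f(X)) = Y`. -/
def IsCoarselyDense {X Y : Type*} [PseudoMetricSpace Y] (B : ℝ≥0) (f : X → Y) : Prop :=
  ∀ y : Y, ∃ x : X, nndist (f x) y ≤ B

/-- A coarse isometry is a coarsely surjective coarse embedding. -/
def IsCoarseIsometry {X Y : Type*} [PseudoMetricSpace X] [PseudoMetricSpace Y]
    (f : X → Y) : Prop :=
  IsCoarseEmbedding f ∧ ∃ B : ℝ≥0, IsCoarselyDense B f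

/-- A geodesic metric space: any two points are joined by an isometrically embedded
segment. -/
def IsGeodesicSpace (X : Type*) [PseudoMetricSpace X] : Prop :=
  ∀ x y : X, ∃ γ : ℝ → X, γ 0 = x ∧ γ (dist x y) = y ∧
    ∀ s ∈ Set.Icc (0 : ℝ) (dist x y), ∀ t ∈ Set.Icc (0 : ℝ) (dist x y),
      dist (γ s) (γ t) = |s - t|

/-- From properness: a bound on the preimage of `[0, M]`. -/
lemma properND_bound {η : ℝ≥0 → ℝ≥0} (hη : ProperND η) (M : ℝ≥0) :
    ∃ ρ : ℝ≥0, ∀ t, η t ≤ M → t ≤ ρ := by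
  obtain ⟨ρ, hρ⟩ := Filter.eventually_atTop.mp (Filter.tendsto_atTop.mp hη.2 (M + 1))
  refine ⟨ρ, fun t ht => ?_⟩
  by_contra h
  push_neg at h
  have h1 : M + 1 ≤ M := (hρ t h.le).trans ht
  simp at h1

/-- Crossing lemma: if `C` is an `(r,A)`-CCC of `W` in a 1-geodesic space, `a ∈ C` and
`b ∉ C`, then `a` is within `d(a,b) + A` of `W`. -/
lemma cross_lemma {X : Type*} [MetricSpace X] (hX : OneGeodesic X)
    {r A : ℝ≥0} (hr : 1 ≤ r) {W C : Set X} (hC : IsCCC r A W C)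
    {a b : X} (ha : a ∈ C) (hb : b ∉ C) :
    ∃ w ∈ W, dist a w ≤ dist a b + A := by
  classical
  by_cases hA : a ∈ nbhd A W
  · obtain ⟨w, hw, hwd⟩ := hA
    refine ⟨w, hw, ?_⟩
    have : dist a w ≤ (A : ℝ) := by
      rw [dist_nndist]; exact_mod_cast hwd
    have h0 : (0 : ℝ) ≤ dist a b := dist_nonneg
    linarith
  · set S : Set X := C \ nbhd A W with hS
    have haS : a ∈ S := ⟨ha, hA⟩
    obtain ⟨m, c, hc0, hcm, hcd⟩ := hX a b
    have hbS : c m ∉ S := by rw [hcm]; exact fun h => hb h.1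
    have hex : ∃ k, c k ∉ S := ⟨m, hbS⟩
    set k := Nat.find hex with hk
    have hkS : c k ∉ S := Nat.find_spec hex
    have hkm : k ≤ m := Nat.find_le hbS
    have hk0 : k ≠ 0 := by
      intro h
      apply hkS
      rw [h, hc0]; exact haS
    have hk1 : 1 ≤ k := Nat.one_le_iff_ne_zero.mpr hk0
    have hprev : c (k - 1) ∈ S := by
      by_contra h
      have h2 : k ≤ k - 1 := Nat.find_le h
      omega
    have hdist1 : dist (c k) (c (k - 1)) = 1 := by
      rw [hcd k hkm (k - 1) (by omega)]
      have : ((k - 1 : ℕ) : ℝ) = (k : ℝ) - 1 := by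
        rw [Nat.cast_sub hk1]; norm_num
      rw [this]
      norm_num
    have hbd : c k ∈ coarseBoundary r S := by
      refine ⟨hkS, c (k - 1), hprev, ?_⟩
      have : (nndist (c k) (c (k - 1)) : ℝ) ≤ (r : ℝ) := by
        rw [coe_nndist, hdist1]; exact_mod_cast hr
      exact_mod_cast this
    obtain ⟨w, hw, hwd⟩ := hC hbd
    refine ⟨w, hw, ?_⟩
    have h1 : dist a (c k) = (k : ℝ) := by
      rw [← hc0, hcd 0 (Nat.zero_le _) k hkm]
      simp
    have h2 : dist a b = (m : ℝ) := by
      rw [← hc0, ← hcm, hcd 0 (Nat.zero_le _) m le_rfl]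
      simp
    have h3 : dist (c k) w ≤ (A : ℝ) := by
      rw [dist_nndist]; exact_mod_cast hwd
    have h4 : (k : ℝ) ≤ (m : ℝ) := by exact_mod_cast hkm
    calc dist a w ≤ dist a (c k) + dist (c k) w := dist_triangle _ _ _
      _ ≤ (m : ℝ) + (A : ℝ) := by rw [h1]; linarith
      _ = dist a b + A := by rw [h2]

/-- If `X` and `Y` are 1-geodesic metric spaces, `f : X → Y` is an
`(η,φ,B)`-coarse isometry and `W ⊆ X` coarsely `n`-separates `X`, then `f(W)` coarsely
`n`-separates `Y`. -/
theorem coarselySeparates_image {X Y : Type*} [MetricSpace X] [MetricSpace Y]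
    (hX : OneGeodesic X) (hY : OneGeodesic Y)
    (η φ : ℝ≥0 → ℝ≥0) (B : ℝ≥0) (hη : ProperND η) (hφ : ProperND φ)
    (f : X → Y) (hf : IsCoarseEmbeddingWith η φ f) (hB : IsCoarselyDense B f)
    (W : Set X) (n : ℕ) (hW : CoarselySeparates n W) :
    CoarselySeparates n (f '' W) := by
  classical
  obtain ⟨C, hCcc, hdeep, hdisj⟩ := hW
  choose r A hr hccc using hCcc
  obtain ⟨ρ, hρ⟩ := properND_bound hη (1 + 2 * B)
  -- the candidate components in Y
  set D : Fin n → Set Y := fun i => nbhd B (f '' C i) with hD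
  -- generic step: pull back two points of Y to X
  have pull : ∀ (y : Y), ∃ x : X, nndist y (f x) ≤ B := by
    intro y
    obtain ⟨x, hx⟩ := hB y
    exact ⟨x, by rwa [nndist_comm]⟩
  -- key lemma: if x ∈ C i, x' ∉ C i and nndist x x' ≤ ρ, then x' ∈ nbhd (ρ + ρ + A i) W
  have key : ∀ (i : Fin n) (x x' : X), x ∈ C i → x' ∉ C i → nndist x x' ≤ ρ →
      ∃ w ∈ W, nndist x' w ≤ ρ + ρ + A i := by
    intro i x x' hx hx' hxx'
    obtain ⟨w, hw, hwd⟩ := cross_lemma hX (hr i) (hccc i) hx hx'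
    refine ⟨w, hw, ?_⟩
    have h1 : dist x x' ≤ (ρ : ℝ) := by rw [dist_nndist]; exact_mod_cast hxx'
    have h2 : dist x' w ≤ dist x' x + dist x w := dist_triangle _ _ _
    have h3 : (nndist x' w : ℝ) ≤ ((ρ + ρ + A i : ℝ≥0) : ℝ) := by
      rw [coe_nndist]
      push_cast
      rw [dist_comm x' x] at h2
      linarith
    exact_mod_cast h3
  -- transporting nearness to W through f
  have push : ∀ (y : Y) (x : X) (w : X) (s : ℝ≥0), w ∈ W → nndist y (f x) ≤ B →
      nndist x w ≤ s → y ∈ nbhd (B + φ s) (f '' W) := by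
    intro y x w s hw hyx hxw
    refine ⟨f w, ⟨w, hw, rfl⟩, ?_⟩
    calc nndist y (f w) ≤ nndist y (f x) + nndist (f x) (f w) := nndist_triangle _ _ _
      _ ≤ B + φ s := add_le_add hyx (le_trans (hf x w).2 (hφ.1 hxw))
  refine ⟨D, ?_, ?_, ?_⟩
  · -- each D i is a coarse complementary component of f '' W
    intro i
    refine ⟨1, B + φ (ρ + ρ + A i), le_rfl, ?_⟩
    intro y hy
    obtain ⟨hynot, z, ⟨hzD, hznN⟩, hyz⟩ := hy
    by_cases hyN : y ∈ nbhd (B + φ (ρ + ρ + A i)) (f '' W)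
    · exact hyN
    -- then y ∉ D i
    have hyD : y ∉ D i := fun h => hynot ⟨h, hyN⟩
    -- pull back z and y
    obtain ⟨fz, ⟨xz, hxz, rfl⟩, hzB⟩ := hzD
    obtain ⟨xy, hxy⟩ := pull y
    have hxyC : xy ∉ C i := fun h => hyD ⟨f xy, ⟨xy, h, rfl⟩, hxy⟩
    -- nndist xz xy ≤ ρ
    have hd1 : η (nndist xz xy) ≤ 1 + 2 * B := by
      refine le_trans (hf xz xy).1 ?_
      calc nndist (f xz) (f xy) ≤ nndist (f xz) z + nndist z (f xy) := nndist_triangle _ _ _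
        _ ≤ nndist (f xz) z + (nndist z y + nndist y (f xy)) :=
            add_le_add (le_refl _) (nndist_triangle _ _ _)
        _ ≤ B + (1 + B) := by
            refine add_le_add ?_ (add_le_add ?_ hxy)
            · rwa [nndist_comm]
            · rwa [nndist_comm]
        _ = 1 + 2 * B := by ring
    have hd2 : nndist xz xy ≤ ρ := hρ _ hd1
    obtain ⟨w, hw, hwd⟩ := key i xz xy hxz hxyC hd2
    exact push y xy w _ hw hxy hwd
  · -- each D i is deep
    intro i ⟨R, hR⟩
    obtain ⟨ρR, hρR⟩ := properND_bound hη R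
    refine hdeep i ⟨ρR, fun x hx => ?_⟩
    have hfx : f x ∈ D i := ⟨f x, ⟨x, hx, rfl⟩, by simp⟩
    obtain ⟨fw, ⟨w, hw, rfl⟩, hle⟩ := hR hfx
    exact ⟨w, hw, hρR _ (le_trans (hf x w).1 hle)⟩
  · -- pairwise coarse disjoint
    intro i j hij
    obtain ⟨Rij, hRij⟩ := hdisj i j hij
    refine ⟨B + φ (max Rij (ρ + ρ + A j)), fun y hy => ?_⟩
    obtain ⟨hyi, hyj⟩ := hy
    obtain ⟨fi, ⟨xi, hxi, rfl⟩, hyfi⟩ := hyi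
    obtain ⟨fj, ⟨xj, hxj, rfl⟩, hyfj⟩ := hyj
    have hd1 : η (nndist xj xi) ≤ 1 + 2 * B := by
      refine le_trans (hf xj xi).1 ?_
      calc nndist (f xj) (f xi) ≤ nndist (f xj) y + nndist y (f xi) := nndist_triangle _ _ _
        _ ≤ B + B := add_le_add (by rw [nndist_comm]; exact hyfj) hyfi
        _ ≤ 1 + 2 * B := by rw [two_mul]; exact le_add_self
    have hd2 : nndist xj xi ≤ ρ := hρ _ hd1
    by_cases hxiCj : xi ∈ C j
    · obtain ⟨w, hw, hwd⟩ := hRij ⟨hxi, hxiCj⟩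
      have := push y xi w (max Rij (ρ + ρ + A j)) hw hyfi (le_trans hwd (le_max_left _ _))
      exact this
    · obtain ⟨w, hw, hwd⟩ := key j xj xi hxj hxiCj hd2
      exact push y xi w (max Rij (ρ + ρ + A j)) hw hyfi (le_trans hwd (le_max_right _ _))
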